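/- Let V be a vector space over a field of characteristic 0 and f : V → V a linear map with f² = 0. Let φ = id + f, and let D : Λ³V → Λ³V be the linear map determined by D(a∧b∧c) = φ(a)∧φ(b)∧φ(c) - a∧b∧c. Then D³(a∧b∧c) = 6 f(a)∧f(b)∧f(c) for all a, b, c ∈ V. -/
import Mathlib


open ExteriorAlgebra

theorem cube_of_unipotent_action_on_wedge (k : Type*) [Field k] [CharZero k]
    (V : Type*) [AddCommGroup V] [Module k V]
    (f : V →ₗ[k] V) (hf : f ∘ₗ f = 0) :
    ∀ a b c : V,
      letI φ : V →ₗ[k] V := LinearMap.id + f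
      letI D : ExteriorAlgebra k V →ₗ[k] ExteriorAlgebra k V :=
        (ExteriorAlgebra.map φ).toLinearMap - LinearMap.id
      D (D (D (ι k a * ι k b * ι k c))) =
        (6 : k) • (ι k (f a) * ι k (f b) * ι k (f c)) := by
  intro a b c
  have hfa : f (f a) = 0 := congrFun (congrArg DFunLike.coe hf) a
  have hfb : f (f b) = 0 := congrFun (congrArg DFunLike.coe hf) b
  have hfc : f (f c) = 0 := congrFun (congrArg DFunLike.coe hf) c
  simp only [LinearMap.sub_apply, AlgHom.toLinearMap_apply, LinearMap.id_apply,
    map_mul, ExteriorAlgebra.map_apply_ι, LinearMap.add_apply, map_add, map_sub,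
    hfa, hfb, hfc, map_zero, add_zero, mul_add, add_mul, mul_sub, sub_mul]
  rw [show ((6:k) = ((6:ℕ):k)) from by norm_num, Nat.cast_smul_eq_nsmul]
  abel
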